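/- arXiv:2403.11968 — 2 statements merged into one kernel-verified Lean document; each statement's English description precedes it below -/
import Mathlib

section
/- Suppose Assumption (A1) holds and let n ∈ ℕ. Then there exists a constant C(n,d) ≥ 1, depending only on n, d, C₁ and C₂, such that for every multi-index v ∈ ℕ^d with ‖v‖₁ ≤ n, every x ∈ ℝ^d, every y ∈ [0,1]^{d_y}, every t > 0 and every 0 < ε ≤ 1/e, the truncation error satisfies ∫_{ℝ^d ∖ B_x} |((α_t z − x)/σ_t)^v| · p(z|y) · (σ_t^d (2π)^{d/2})^{−1} exp(−‖α_t z − x‖₂²/(2σ_t²)) dz ≤ ε, where B_x = { z ∈ ℝ^d : for every coordinate i, (x_i − σ_t C(n,d)√(log ε^{−1}))/α_t ≤ z_i ≤ (x_i + σ_t C(n,d)√(log ε^{−1}))/α_t and −C(n,d)√(log ε^{−1}) ≤ z_i ≤ C(n,d)√(log ε^{−1}) }, and w^v denotes the monomial ∏_i w_i^{v_i}. -/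
open MeasureTheory

noncomputable section

namespace CDM

/-- The ReLU activation function. -/
def relu (x : ℝ) : ℝ := max x 0

/-- The Euclidean norm `‖x‖₂` of a vector `x ∈ ℝ^n`. -/
def norm2 {n : ℕ} (x : Fin n → ℝ) : ℝ := Real.sqrt (∑ i, x i ^ 2)

/-- The sup norm `‖x‖_∞` of a vector `x ∈ ℝ^n`. -/
def normInf {n : ℕ} (x : Fin n → ℝ) : ℝ := ⨆ i, |x i|

/-- A feedforward ReLU network with `depth` affine layers, computing
`x ↦ (A_{L-1} ReLU(·) + b_{L-1}) ∘ ⋯ ∘ (A_0 x + b_0)`. -/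
structure ReLUNet (din dout : ℕ) where
  depth : ℕ
  dims : ℕ → ℕ
  A : (k : ℕ) → Matrix (Fin (dims (k + 1))) (Fin (dims k)) ℝ
  b : (k : ℕ) → Fin (dims (k + 1)) → ℝ
  depth_pos : 1 ≤ depth
  dims_in : dims 0 = din
  dims_out : dims depth = dout

def ReLUNet.evalAux {din dout : ℕ} (net : ReLUNet din dout)
    (x : Fin (net.dims 0) → ℝ) : (k : ℕ) → Fin (net.dims k) → ℝ
  | 0 => x
  | k + 1 => fun i =>
      (∑ j, net.A k i j *
        (if k = 0 then ReLUNet.evalAux net x k j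
         else relu (ReLUNet.evalAux net x k j))) + net.b k i

/-- The function computed by a ReLU network. -/
def ReLUNet.eval {din dout : ℕ} (net : ReLUNet din dout) (x : Fin din → ℝ) :
    Fin dout → ℝ :=
  fun i => net.evalAux (fun j => x (Fin.cast net.dims_in j)) net.depth
    (Fin.cast net.dims_out.symm i)

/-- The number of nonzero parameters of a ReLU network. -/
def ReLUNet.sparsity {din dout : ℕ} (net : ReLUNet din dout) : ℕ :=
  ∑ k ∈ Finset.range net.depth,
    (Nat.card {q : Fin (net.dims (k + 1)) × Fin (net.dims k) // net.A k q.1 q.2 ≠ 0} +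
      Nat.card {i : Fin (net.dims (k + 1)) // net.b k i ≠ 0})

/-- Size constraints on a ReLU network: depth at most `L`, widths at most `W`,
parameter magnitudes at most `κ`, at most `K` nonzero parameters. -/
def ReLUNet.HasSize {din dout : ℕ} (net : ReLUNet din dout)
    (W : ℕ) (κ : ℝ) (L K : ℕ) : Prop :=
  net.depth ≤ L ∧ (∀ k ≤ net.depth, net.dims k ≤ W) ∧
    (∀ k < net.depth, (∀ i j, |net.A k i j| ≤ κ) ∧ ∀ i, |net.b k i| ≤ κ) ∧
    net.sparsity ≤ K

/-- The class `𝓕(M_t, W, κ, L, K)` of conditional score networks,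
taking inputs `(x, y, t) ∈ ℝ^d × ℝ^{d_y} × ℝ` and values in `ℝ^d`. -/
def InScoreClass (d dy : ℕ) (M : ℝ → ℝ) (W : ℕ) (κ : ℝ) (L K : ℕ)
    (s : (Fin d → ℝ) → (Fin dy → ℝ) → ℝ → Fin d → ℝ) : Prop :=
  ∃ net : ReLUNet (d + dy + 1) d, net.HasSize W κ L K ∧
    (∀ x y t, s x y t = net.eval (Fin.append (Fin.append x y) ![t])) ∧
    ∀ t x y i, |s x y t i| ≤ M t

/-- The class of unconditional score networks, with inputs `(x, t)`. -/
def InScoreClass2 (d : ℕ) (M : ℝ → ℝ) (W : ℕ) (κ : ℝ) (L K : ℕ)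
    (s : (Fin d → ℝ) → ℝ → Fin d → ℝ) : Prop :=
  ∃ net : ReLUNet (d + 1) d, net.HasSize W κ L K ∧
    (∀ x t, s x t = net.eval (Fin.append x ![t])) ∧
    ∀ t x i, |s x t i| ≤ M t

/-- `α_t = e^{-t/2}`. -/
def alphaT (t : ℝ) : ℝ := Real.exp (-t / 2)

/-- `σ_t = √(1 - e^{-t})`. -/
def sigmaT (t : ℝ) : ℝ := Real.sqrt (1 - Real.exp (-t))

/-- The Gaussian transition kernel: the density of `N(α_t z, σ_t² I_d)` at `x`. -/
def gaussKernel (d : ℕ) (t : ℝ) (z x : Fin d → ℝ) : ℝ :=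
  (sigmaT t ^ d * (2 * Real.pi) ^ ((d : ℝ) / 2))⁻¹ *
    Real.exp (-(norm2 (fun i => alphaT t * z i - x i)) ^ 2 / (2 * sigmaT t ^ 2))

/-- The diffused conditional density `p_t(x|y)`. -/
def diffDensity (d dy : ℕ) (p : (Fin d → ℝ) → (Fin dy → ℝ) → ℝ) (t : ℝ)
    (x : Fin d → ℝ) (y : Fin dy → ℝ) : ℝ :=
  ∫ z : Fin d → ℝ, p z y * gaussKernel d t z x

/-- The conditional score `∇_x log p_t(x|y)`. -/
def score (d dy : ℕ) (p : (Fin d → ℝ) → (Fin dy → ℝ) → ℝ) (t : ℝ)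
    (x : Fin d → ℝ) (y : Fin dy → ℝ) : Fin d → ℝ :=
  fun i => fderiv ℝ (fun x' => Real.log (diffDensity d dy p t x' y)) x (Pi.single i 1)

/-- The partial derivative in the `i`-th coordinate direction. -/
def pderiv (D : ℕ) (i : Fin D) (f : (Fin D → ℝ) → ℝ) : (Fin D → ℝ) → ℝ :=
  fun x => fderiv ℝ f x (Pi.single i 1)

/-- The multi-index partial derivative `∂^k f`. -/
def multiDeriv (D : ℕ) (k : Fin D → ℕ) : ((Fin D → ℝ) → ℝ) → ((Fin D → ℝ) → ℝ) :=
  (List.ofFn fun i : Fin D => (pderiv D i)^[k i]).foldr (· ∘ ·) id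

/-- Membership in the Hölder ball `H^β(ℝ^D, B)`: `f` is `⌊β⌋`-times differentiable and
its Hölder norm is `< B`. -/
def MemHolderBall (D : ℕ) (β B : ℝ) (f : (Fin D → ℝ) → ℝ) : Prop :=
  ContDiff ℝ (⌊β⌋₊ : ℕ) f ∧
  ∃ b₁ b₂ : ℝ, b₁ + b₂ < B ∧
    (∀ k : Fin D → ℕ, (∑ i, k i) ≤ ⌊β⌋₊ → ∀ x, |multiDeriv D k f x| ≤ b₁) ∧
    (∀ k : Fin D → ℕ, (∑ i, k i) = ⌊β⌋₊ → ∀ x z, x ≠ z →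
      |multiDeriv D k f x - multiDeriv D k f z| ≤
        b₂ * normInf (x - z) ^ (β - (⌊β⌋₊ : ℝ)))

/-- `y ∈ [0,1]^{d_y}`. -/
def InUnitCube (dy : ℕ) (y : Fin dy → ℝ) : Prop := ∀ i, y i ∈ Set.Icc (0 : ℝ) 1

/-- Assumption (A1): `p(·|y)` is a conditional probability density, `(x,y) ↦ p(x|y)`
agrees on `ℝ^d × [0,1]^{d_y}` with a function in the Hölder ball `H^β(ℝ^{d+d_y}, B)`,
and `p(x|y) ≤ C₁ exp(-C₂‖x‖₂²/2)`. -/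
structure AssumptionA1 (d dy : ℕ) (β B C₁ C₂ : ℝ)
    (p : (Fin d → ℝ) → (Fin dy → ℝ) → ℝ) : Prop where
  beta_pos : 0 < β
  B_pos : 0 < B
  C1_pos : 0 < C₁
  C2_pos : 0 < C₂
  nonneg : ∀ x y, InUnitCube dy y → 0 ≤ p x y
  total_mass : ∀ y, InUnitCube dy y → (∫ x, p x y) = 1
  holder : ∃ q : (Fin (d + dy) → ℝ) → ℝ, MemHolderBall (d + dy) β B q ∧
    ∀ (x : Fin d → ℝ) (y : Fin dy → ℝ), InUnitCube dy y → p x y = q (Fin.append x y)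
  tail : ∀ x y, InUnitCube dy y → p x y ≤ C₁ * Real.exp (-C₂ * norm2 x ^ 2 / 2)

/-- The conditional density of Assumption (A2): `p(x|y) = exp(-C₂‖x‖₂²/2)·f(x,y)`. -/
def densityA2 (d dy : ℕ) (C₂ : ℝ) (f : (Fin d → ℝ) → (Fin dy → ℝ) → ℝ) :
    (Fin d → ℝ) → (Fin dy → ℝ) → ℝ :=
  fun x y => Real.exp (-C₂ * norm2 x ^ 2 / 2) * f x y

/-- Assumption (A2): `p(x|y) = exp(-C₂‖x‖₂²/2)·f(x,y)` is a conditional probability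
density, where `f` agrees on `ℝ^d × [0,1]^{d_y}` with a function in the Hölder ball
`H^β(ℝ^{d+d_y}, B)` and `f ≥ C > 0`. -/
structure AssumptionA2 (d dy : ℕ) (β B C C₂ : ℝ)
    (f : (Fin d → ℝ) → (Fin dy → ℝ) → ℝ) : Prop where
  beta_pos : 0 < β
  B_pos : 0 < B
  C_pos : 0 < C
  C2_pos : 0 < C₂
  holder : ∃ q : (Fin (d + dy) → ℝ) → ℝ, MemHolderBall (d + dy) β B q ∧
    ∀ (x : Fin d → ℝ) (y : Fin dy → ℝ), InUnitCube dy y → f x y = q (Fin.append x y)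
  lower : ∀ x y, InUnitCube dy y → C ≤ f x y
  total_mass : ∀ y, InUnitCube dy y → (∫ x, densityA2 d dy C₂ f x y) = 1

/-- `σ̂_t = σ_t/√(α_t² + C₂σ_t²)`. -/
def sigmaHat (C₂ t : ℝ) : ℝ := sigmaT t / Real.sqrt (alphaT t ^ 2 + C₂ * sigmaT t ^ 2)

/-- `α̂_t = α_t/(α_t² + C₂σ_t²)`. -/
def alphaHat (C₂ t : ℝ) : ℝ := alphaT t / (alphaT t ^ 2 + C₂ * sigmaT t ^ 2)

/-- `h(x,y,t) = ∫ f(z,y) (2π)^{-d/2} σ̂_t^{-d} exp(-‖z - α̂_t x‖²/(2σ̂_t²)) dz`. -/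
def hFun (d dy : ℕ) (C₂ : ℝ) (f : (Fin d → ℝ) → (Fin dy → ℝ) → ℝ) (t : ℝ)
    (x : Fin d → ℝ) (y : Fin dy → ℝ) : ℝ :=
  ∫ z : Fin d → ℝ, f z y * ((2 * Real.pi) ^ ((d : ℝ) / 2) * sigmaHat C₂ t ^ d)⁻¹ *
    Real.exp (-(norm2 (fun i => z i - alphaHat C₂ t * x i)) ^ 2 / (2 * sigmaHat C₂ t ^ 2))

/-- The total variation distance between two measures. -/
def tvDist {α : Type*} [MeasurableSpace α] (μ ν : Measure α) : ℝ :=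
  ⨆ A : {A : Set α // MeasurableSet A}, |(μ A.1).toReal - (ν A.1).toReal|

/-- The classifier-free guidance loss `ℓ(x,y;s)`. -/
def cfLoss (d dy : ℕ) (t₀ T : ℝ)
    (s₁ : (Fin d → ℝ) → (Fin dy → ℝ) → ℝ → Fin d → ℝ)
    (s₂ : (Fin d → ℝ) → ℝ → Fin d → ℝ)
    (x : Fin d → ℝ) (y : Fin dy → ℝ) : ℝ :=
  ∫ t in t₀..T, (T - t₀)⁻¹ *
    ∫ x' : Fin d → ℝ, gaussKernel d t x x' *
      ((1 / 2) * norm2 (fun i => s₁ x' y t i + (x' i - alphaT t * x i) / sigmaT t ^ 2) ^ 2 +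
       (1 / 2) * norm2 (fun i => s₂ x' t i + (x' i - alphaT t * x i) / sigmaT t ^ 2) ^ 2)

/-- The empirical classifier-free risk `𝓛̂(s)` on a sample of size `n`. -/
def empRisk (d dy n : ℕ) (t₀ T : ℝ)
    (s₁ : (Fin d → ℝ) → (Fin dy → ℝ) → ℝ → Fin d → ℝ)
    (s₂ : (Fin d → ℝ) → ℝ → Fin d → ℝ)
    (ω : Fin n → (Fin d → ℝ) × (Fin dy → ℝ)) : ℝ :=
  (n : ℝ)⁻¹ * ∑ i, cfLoss d dy t₀ T s₁ s₂ (ω i).1 (ω i).2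

/-- The conditional score risk `𝓡(s₁)`. -/
def condRisk (d dy : ℕ) (p : (Fin d → ℝ) → (Fin dy → ℝ) → ℝ)
    (Py : Measure (Fin dy → ℝ)) (t₀ T : ℝ)
    (s₁ : (Fin d → ℝ) → (Fin dy → ℝ) → ℝ → Fin d → ℝ) : ℝ :=
  ∫ t in t₀..T, (T - t₀)⁻¹ *
    ∫ y, (∫ x : Fin d → ℝ,
      norm2 (fun i => s₁ x y t i - score d dy p t x y i) ^ 2 *
        diffDensity d dy p t x y) ∂Py

/-- The density class `𝓟` of Proposition 4.5. -/
def PClass (d : ℕ) (β B C C₂ : ℝ) : Set ((Fin d → ℝ) → ℝ) :=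
  {p | (∀ x, 0 ≤ p x) ∧ (∫ x, p x) = 1 ∧
    ∃ f : (Fin d → ℝ) → ℝ, MemHolderBall d β B f ∧ (∀ x, C ≤ f x) ∧
      ∀ x, p x = f x * Real.exp (-C₂ * norm2 x ^ 2)}


/-- Auxiliary: monomial bound `|u|^k ≤ exp(2k² + u²/8)`. -/
lemma aux_abs_pow_le_exp (k : ℕ) (u : ℝ) : |u| ^ k ≤ Real.exp (2 * (k : ℝ)^2 + u^2/8) := by
  have h1 : |u| ^ k ≤ Real.exp ((k : ℝ) * |u|) := by
    calc |u| ^ k ≤ Real.exp |u| ^ k :=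
          pow_le_pow_left₀ (abs_nonneg u) (by linarith [Real.add_one_le_exp |u|]) k
    _ = Real.exp ((k : ℝ) * |u|) := by rw [← Real.exp_nat_mul]
  refine h1.trans (Real.exp_le_exp.mpr ?_)
  nlinarith [sq_nonneg (2*(k:ℝ) - |u|/2), sq_abs u]

/-- Auxiliary: integrability of the combined 1-d gaussian factor. -/
lemma aux_integrable_coord (C₂ σ α b : ℝ) (hC₂ : 0 < C₂) :
    Integrable (fun s : ℝ => Real.exp (-(C₂ * s^2/4 + ((α*s - b)/σ)^2/8))) := by
  refine (integrable_exp_neg_mul_sq (show (0:ℝ) < C₂/4 by linarith)).mono'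
    (Continuous.aestronglyMeasurable (by continuity)) (ae_of_all _ fun s => ?_)
  rw [Real.norm_eq_abs, Real.abs_exp]
  apply Real.exp_le_exp.mpr
  nlinarith [sq_nonneg ((α*s - b)/σ), sq_nonneg s]

/-- Auxiliary: per-coordinate gaussian-integral bound, uniform in `t` and the shift. -/
lemma aux_coord_bound (C₂ σ α b : ℝ) (hC₂ : 0 < C₂) (hσ : 0 < σ) (hα : 0 < α)
    (h1 : α^2 + σ^2 = 1) :
    (σ * Real.sqrt (2*Real.pi))⁻¹ *
      ∫ s : ℝ, Real.exp (-(C₂ * s^2/4 + ((α*s - b)/σ)^2/8)) ≤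
    Real.sqrt (4 / min C₂ 1) := by
  have hπ := Real.pi_pos
  set A : ℝ := C₂/4 + α^2/(8*σ^2) with hA_def
  have hA : 0 < A := by positivity
  set m : ℝ := α*b/(8*σ^2) / A with hm_def
  have hpt : ∀ s : ℝ, Real.exp (-(C₂ * s^2/4 + ((α*s - b)/σ)^2/8)) ≤
      Real.exp (-A * (s - m)^2) := by
    intro s
    apply Real.exp_le_exp.mpr
    have hrem : 0 ≤ b^2/(8*σ^2) - (α*b/(8*σ^2))^2 / A := by
      rw [sub_nonneg, div_le_div_iff₀ hA (by positivity)]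
      have hAα : α^2/(8*σ^2) ≤ A := by rw [hA_def]; linarith
      have e : (α*b/(8*σ^2))^2 * (8*σ^2) = b^2 * (α^2/(8*σ^2)) := by
        field_simp
      rw [e]; exact mul_le_mul_of_nonneg_left hAα (sq_nonneg b)
    have hid : C₂ * s^2/4 + ((α*s - b)/σ)^2/8 =
        A * (s - m)^2 + (b^2/(8*σ^2) - (α*b/(8*σ^2))^2 / A) := by
      rw [hm_def, hA_def]
      field_simp
      ring
    nlinarith [hrem, hid]
  have hint2 : Integrable (fun s : ℝ => Real.exp (-A * (s - m)^2)) :=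
    (integrable_exp_neg_mul_sq hA).comp_sub_right m
  have hle : (∫ s : ℝ, Real.exp (-(C₂ * s^2/4 + ((α*s - b)/σ)^2/8))) ≤
      ∫ s : ℝ, Real.exp (-A * (s - m)^2) :=
    integral_mono (aux_integrable_coord C₂ σ α b hC₂) hint2 hpt
  have hval : (∫ s : ℝ, Real.exp (-A * (s - m)^2)) = Real.sqrt (Real.pi / A) := by
    have h := MeasureTheory.integral_sub_right_eq_self (μ := volume)
      (fun u : ℝ => Real.exp (-A * u^2)) m
    simpa using h.trans (integral_gaussian A)
  have hminC : 0 < min C₂ 1 := lt_min hC₂ one_pos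
  have hAlow : min C₂ 1 / (8*σ^2) ≤ A := by
    rw [hA_def, div_le_iff₀ (by positivity),
      show (C₂/4 + α^2/(8*σ^2)) * (8*σ^2) = 2*C₂*σ^2 + α^2 from by field_simp; ring]
    have h2 : min C₂ 1 ≤ C₂ := min_le_left _ _
    have h3 : min C₂ 1 ≤ 1 := min_le_right _ _
    nlinarith [mul_le_mul_of_nonneg_right h2 (sq_nonneg σ),
      mul_le_mul_of_nonneg_right h3 (sq_nonneg α), sq_nonneg σ, sq_nonneg α]
  have hsq : Real.sqrt (Real.pi / A) ≤ σ * Real.sqrt (2*Real.pi) * Real.sqrt (4 / min C₂ 1) := by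
    have heq : Real.sqrt (σ^2 * (2*Real.pi) * (4 / min C₂ 1)) =
        σ * Real.sqrt (2*Real.pi) * Real.sqrt (4 / min C₂ 1) := by
      rw [Real.sqrt_mul (by positivity : (0:ℝ) ≤ σ^2 * (2*Real.pi)),
        Real.sqrt_mul (sq_nonneg σ), Real.sqrt_sq hσ.le]
    rw [← heq]
    apply Real.sqrt_le_sqrt
    rw [div_le_iff₀ hA]
    have key : Real.pi ≤ σ^2 * (2*Real.pi) * (4 / min C₂ 1) * (min C₂ 1 / (8*σ^2)) := by
      rw [show σ^2 * (2*Real.pi) * (4 / min C₂ 1) * (min C₂ 1 / (8*σ^2)) = Real.pi *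
          ((σ^2/σ^2) * ((min C₂ 1)/(min C₂ 1))) by ring]
      rw [div_self (by positivity), div_self (ne_of_gt hminC), mul_one, mul_one]
    calc Real.pi ≤ σ^2 * (2*Real.pi) * (4 / min C₂ 1) * (min C₂ 1 / (8*σ^2)) := key
      _ ≤ σ^2 * (2*Real.pi) * (4 / min C₂ 1) * A :=
        mul_le_mul_of_nonneg_left hAlow (by positivity)
  calc (σ * Real.sqrt (2*Real.pi))⁻¹ *
      ∫ s : ℝ, Real.exp (-(C₂ * s^2/4 + ((α*s - b)/σ)^2/8))
      ≤ (σ * Real.sqrt (2*Real.pi))⁻¹ *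
        (σ * Real.sqrt (2*Real.pi) * Real.sqrt (4 / min C₂ 1)) := by
        apply mul_le_mul_of_nonneg_left (hle.trans (hval.le.trans hsq)) (by positivity)
    _ = Real.sqrt (4 / min C₂ 1) := by
        rw [← mul_assoc, inv_mul_cancel₀ (by positivity), one_mul]

/-- Auxiliary: a point outside the clipping box has a large coordinate. -/
lemma aux_bad_coord (α σ R xi zi : ℝ) (hα : 0 < α) (hσ : 0 < σ) (hR0 : 0 ≤ R)
    (h : ¬(((xi - σ*R)/α ≤ zi ∧ zi ≤ (xi + σ*R)/α) ∧ (-R ≤ zi ∧ zi ≤ R))) :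
    R^2 ≤ zi^2 ∨ R^2 ≤ ((α*zi - xi)/σ)^2 := by
  by_contra hcon
  push_neg at hcon
  obtain ⟨hz2, hu2⟩ := hcon
  apply h
  have hculp : ((α*zi - xi)/σ)^2 * σ^2 = (α*zi - xi)^2 := by field_simp
  have hu' : (α*zi - xi)^2 < σ^2 * R^2 := by
    nlinarith [mul_lt_mul_of_pos_right hu2 (show (0:ℝ) < σ^2 by positivity)]
  have hσR : 0 ≤ σ * R := mul_nonneg hσ.le hR0
  refine ⟨⟨?_, ?_⟩, ?_, ?_⟩
  · rw [div_le_iff₀ hα]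
    nlinarith [hu', sq_nonneg (α*zi - xi + σ*R)]
  · rw [le_div_iff₀ hα]
    nlinarith [hu', sq_nonneg (α*zi - xi - σ*R)]
  · nlinarith [hz2, sq_nonneg (zi + R)]
  · nlinarith [hz2, sq_nonneg (zi - R)]

/-- Auxiliary: key exponent inequality. -/
lemma aux_sumkey (c C₂ Cnd L R zi2 ui2 Sz Su : ℝ) (hC₂ : 0 < C₂)
    (h2 : c ≤ C₂/4) (h3 : c ≤ 1/4) (hL0 : 0 ≤ L) (hR2 : R^2 = Cnd^2 * L)
    (hSz : zi2 ≤ Sz) (hSu : ui2 ≤ Su) (hSznn : 0 ≤ Sz) (hSunn : 0 ≤ Su)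
    (hcase : R^2 ≤ zi2 ∨ R^2 ≤ ui2) :
    c * Cnd^2 * L ≤ C₂ * Sz/4 + Su/4 := by
  have hCL : (0:ℝ) ≤ Cnd^2 * L := mul_nonneg (sq_nonneg _) hL0
  rcases hcase with h | h
  · nlinarith [mul_le_mul_of_nonneg_right h2 hCL]
  · nlinarith [mul_le_mul_of_nonneg_right h3 hCL]

/-- Auxiliary: combining exponentials. -/
lemma aux_exp_combine (C₁ c₀ n2 K A B : ℝ) (hC₁ : 0 ≤ C₁) (hc₀ : 0 ≤ c₀)
    (h : K ≤ A/4 + B/4) :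
    Real.exp (n2 + B/8) * (C₁ * Real.exp (-A/2) * (c₀ * Real.exp (-B/2))) ≤
    Real.exp (-K) * (C₁ * Real.exp n2) * (c₀ * Real.exp (-(A/4 + B/8))) := by
  have e1 : Real.exp (n2 + B/8) * (C₁ * Real.exp (-A/2) * (c₀ * Real.exp (-B/2))) =
      (C₁ * c₀) * Real.exp (n2 + B/8 + -A/2 + -B/2) := by
    simp only [Real.exp_add]; ring
  have e2 : Real.exp (-K) * (C₁ * Real.exp n2) * (c₀ * Real.exp (-(A/4 + B/8))) =
      (C₁ * c₀) * Real.exp (-K + n2 + -(A/4 + B/8)) := by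
    simp only [Real.exp_add]; ring
  rw [e1, e2]
  exact mul_le_mul_of_nonneg_left (Real.exp_le_exp.mpr (by linarith))
    (mul_nonneg hC₁ hc₀)

/-- Auxiliary: final exponent comparison. -/
lemma aux_final (c Cnd L mx : ℝ) (hCndsq : 1 + mx ≤ c * Cnd^2) (hL1 : 1 ≤ L)
    (hmx : 0 ≤ mx) : -(c*Cnd^2*L) ≤ -(L + mx) := by
  nlinarith [mul_le_mul_of_nonneg_right hCndsq (show (0:ℝ) ≤ L by linarith),
    mul_nonneg hmx (sub_nonneg.mpr hL1)]

set_option maxHeartbeats 1000000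

/-- Lemma A.7: clipping the integral defining `p_t` to a bounded
region, under Assumption (A1). -/
theorem statement8
    (d : ℕ) (hd : 1 ≤ d) (n : ℕ) (C₁ C₂ : ℝ) (hC₁ : 0 < C₁) (hC₂ : 0 < C₂) :
    ∃ Cnd : ℝ, 1 ≤ Cnd ∧
      ∀ dy : ℕ, 1 ≤ dy →
        ∀ (β B : ℝ) (p : (Fin d → ℝ) → (Fin dy → ℝ) → ℝ),
          AssumptionA1 d dy β B C₁ C₂ p →
          ∀ v : Fin d → ℕ, (∑ i, v i) ≤ n →
            ∀ (x : Fin d → ℝ) (y : Fin dy → ℝ), InUnitCube dy y →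
              ∀ t : ℝ, 0 < t → ∀ ε : ℝ, 0 < ε → ε ≤ 1 / Real.exp 1 →
                (∫ z in {z : Fin d → ℝ | ∀ i,
                    ((x i - sigmaT t * (Cnd * Real.sqrt (Real.log ε⁻¹))) / alphaT t ≤ z i ∧
                      z i ≤ (x i + sigmaT t * (Cnd * Real.sqrt (Real.log ε⁻¹))) / alphaT t) ∧
                    (-(Cnd * Real.sqrt (Real.log ε⁻¹)) ≤ z i ∧
                      z i ≤ Cnd * Real.sqrt (Real.log ε⁻¹))}ᶜ,
                  |∏ i, ((alphaT t * z i - x i) / sigmaT t) ^ v i| *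
                    (p z y * gaussKernel d t z x))
                  ≤ ε := by
  classical
  have hπ := Real.pi_pos
  set minC : ℝ := min C₂ 1 with hminC_def
  have hminC : 0 < minC := lt_min hC₂ one_pos
  set c : ℝ := minC / 4 with hc_def
  have hc : 0 < c := by positivity
  set M₁ : ℝ := Real.sqrt (4 / minC) with hM₁_def
  have hM₁ : 0 < M₁ := Real.sqrt_pos.mpr (by positivity)
  set K₀ : ℝ := C₁ * Real.exp (2 * (n:ℝ)^2) * M₁ ^ d with hK₀_def
  have hK₀ : 0 < K₀ := by positivity
  set Cnd : ℝ := max 1 (Real.sqrt ((1 + max (Real.log K₀) 0) / c)) with hCnd_def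
  have hCnd1 : (1:ℝ) ≤ Cnd := le_max_left _ _
  have hCndsq : 1 + max (Real.log K₀) 0 ≤ c * Cnd^2 := by
    have hq : 0 ≤ (1 + max (Real.log K₀) 0) / c := by positivity
    have h1 : Real.sqrt ((1 + max (Real.log K₀) 0)/c) ≤ Cnd := le_max_right _ _
    have h2 : (1 + max (Real.log K₀) 0)/c ≤ Cnd^2 := by
      rw [← Real.sq_sqrt hq]
      exact pow_le_pow_left₀ (Real.sqrt_nonneg _) h1 2
    calc 1 + max (Real.log K₀) 0 = c * ((1 + max (Real.log K₀) 0)/c) := by field_simp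
      _ ≤ c * Cnd^2 := mul_le_mul_of_nonneg_left h2 hc.le
  refine ⟨Cnd, hCnd1, ?_⟩
  intro dy hdy β B p hA1 v hv x y hy t ht ε hε hε2
  have hα : 0 < alphaT t := Real.exp_pos _
  have hexplt : Real.exp (-t) < 1 := Real.exp_lt_one_iff.mpr (by linarith)
  have hσ : 0 < sigmaT t := Real.sqrt_pos.mpr (by linarith)
  have hα2 : alphaT t ^ 2 = Real.exp (-t) := by
    rw [alphaT, sq, ← Real.exp_add]; ring_nf
  have h1 : alphaT t ^ 2 + sigmaT t ^ 2 = 1 := by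
    rw [sigmaT, Real.sq_sqrt (by linarith), hα2]; ring
  have hεinv : Real.exp 1 ≤ ε⁻¹ := by
    rw [← one_div, le_div_iff₀ hε]
    calc Real.exp 1 * ε ≤ Real.exp 1 * (1 / Real.exp 1) :=
      mul_le_mul_of_nonneg_left hε2 (Real.exp_pos 1).le
    _ = 1 := by field_simp
  set L : ℝ := Real.log ε⁻¹ with hL_def
  have hL1 : 1 ≤ L := by
    rw [hL_def, Real.le_log_iff_exp_le (by positivity)]
    exact hεinv
  have hL0 : 0 ≤ L := by linarith
  have hexpL : Real.exp (-L) = ε := by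
    rw [hL_def, Real.log_inv, neg_neg, Real.exp_log hε]
  set R : ℝ := Cnd * Real.sqrt L with hR_def
  have hR0 : 0 ≤ R := by positivity
  have hR2 : R^2 = Cnd^2 * L := by rw [hR_def, mul_pow, Real.sq_sqrt hL0]
  set S : Set (Fin d → ℝ) := {z : Fin d → ℝ | ∀ i,
      ((x i - sigmaT t * R) / alphaT t ≤ z i ∧
        z i ≤ (x i + sigmaT t * R) / alphaT t) ∧
      (-R ≤ z i ∧ z i ≤ R)} with hS_def
  have hS : MeasurableSet S := by
    rw [hS_def]
    simp only [Set.setOf_forall, Set.setOf_and]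
    refine MeasurableSet.iInter fun i => ?_
    exact (((measurableSet_le measurable_const (measurable_pi_apply i)).inter
      (measurableSet_le (measurable_pi_apply i) measurable_const)).inter
      ((measurableSet_le measurable_const (measurable_pi_apply i)).inter
      (measurableSet_le (measurable_pi_apply i) measurable_const)))
  -- measurability of the integrand
  obtain ⟨q, hqH, hpq⟩ := hA1.holder
  have hq_cont : Continuous q := hqH.1.continuous
  have happ : Measurable (fun z : Fin d → ℝ => Fin.append z y) := by
    refine measurable_pi_iff.mpr fun i => ?_
    refine Fin.addCases (fun j => ?_) (fun j => ?_) i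
    · simp only [Fin.append_left]; exact measurable_pi_apply j
    · simp only [Fin.append_right]; exact measurable_const
  have hp_meas : Measurable (fun z : Fin d → ℝ => p z y) := by
    have he : (fun z : Fin d → ℝ => p z y) = fun z => q (Fin.append z y) :=
      funext fun z => hpq z y hy
    rw [he]; exact hq_cont.measurable.comp happ
  have hp_nonneg : ∀ z, 0 ≤ p z y := fun z => hA1.nonneg z y hy
  have hgK_nonneg : ∀ z, 0 ≤ gaussKernel d t z x := fun z => by
    unfold gaussKernel
    positivity
  have hgK_meas : Measurable (fun z : Fin d → ℝ => gaussKernel d t z x) := by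
    unfold gaussKernel norm2
    have hsum : Measurable (fun z : Fin d → ℝ => ∑ i, (alphaT t * z i - x i)^2) :=
      Finset.measurable_sum _ fun i _ =>
        (((measurable_pi_apply i).const_mul _).sub measurable_const).pow_const 2
    exact measurable_const.mul (Real.measurable_exp.comp
      ((((Real.continuous_sqrt.measurable.comp hsum).pow_const 2).neg).div_const _))
  have hmon_meas : Measurable
      (fun z : Fin d → ℝ => |∏ i, ((alphaT t * z i - x i) / sigmaT t) ^ v i|) :=
    (Finset.measurable_prod _ fun i _ =>
      ((((measurable_pi_apply i).const_mul _).sub measurable_const).div_const _).pow_const _).abs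
  set f : (Fin d → ℝ) → ℝ := fun z =>
    |∏ i, ((alphaT t * z i - x i) / sigmaT t) ^ v i| * (p z y * gaussKernel d t z x)
    with hf_def
  show (∫ z in Sᶜ, f z) ≤ ε
  have hf_meas : Measurable f := hmon_meas.mul (hp_meas.mul hgK_meas)
  have hf_nonneg : ∀ z, 0 ≤ f z := fun z =>
    mul_nonneg (abs_nonneg _) (mul_nonneg (hp_nonneg z) (hgK_nonneg z))
  set c₀ : ℝ := (sigmaT t ^ d * (2*Real.pi) ^ ((d:ℝ)/2))⁻¹ with hc₀_def
  have hc₀ : 0 < c₀ := by rw [hc₀_def]; positivity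
  set gi : Fin d → ℝ → ℝ := fun i s =>
    Real.exp (-(C₂ * s^2/4 + ((alphaT t * s - x i)/sigmaT t)^2/8)) with hgi_def
  set bound : (Fin d → ℝ) → ℝ := fun z =>
    Real.exp (-(c*Cnd^2*L)) * (C₁ * Real.exp (2*(n:ℝ)^2)) * (c₀ * ∏ i, gi i (z i))
    with hbound_def
  have hgi_nonneg : ∀ i s, 0 ≤ gi i s := by
    intro i s; simp only [hgi_def]; positivity
  clear_value minC c M₁ K₀ Cnd L R S f c₀ gi bound
  -- pointwise bound on the complement
  have hptwise : ∀ z ∈ Sᶜ, f z ≤ bound z := by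
    intro z hz
    have hbad : ∃ i, R^2 ≤ (z i)^2 ∨ R^2 ≤ ((alphaT t * z i - x i)/sigmaT t)^2 := by
      rw [Set.mem_compl_iff, hS_def, Set.mem_setOf_eq, not_forall] at hz
      obtain ⟨i, hi⟩ := hz
      exact ⟨i, aux_bad_coord (alphaT t) (sigmaT t) R (x i) (z i) hα hσ hR0 hi⟩
    have hSznn : (0:ℝ) ≤ ∑ j, (z j)^2 := Finset.sum_nonneg fun j _ => sq_nonneg _
    have hSunn : (0:ℝ) ≤ ∑ j, ((alphaT t * z j - x j)/sigmaT t)^2 :=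
      Finset.sum_nonneg fun j _ => sq_nonneg _
    have hsumkey : c * Cnd^2 * L ≤ C₂ * (∑ j, (z j)^2)/4 +
        (∑ j, ((alphaT t * z j - x j)/sigmaT t)^2)/4 := by
      obtain ⟨i, hcase⟩ := hbad
      have h2 : c ≤ C₂/4 := by
        rw [hc_def, hminC_def]; have := min_le_left C₂ 1; linarith
      have h3 : c ≤ 1/4 := by
        rw [hc_def, hminC_def]; have := min_le_right C₂ 1; linarith
      exact aux_sumkey c C₂ Cnd L R ((z i)^2) (((alphaT t * z i - x i)/sigmaT t)^2)
        (∑ j, (z j)^2) (∑ j, ((alphaT t * z j - x j)/sigmaT t)^2) hC₂ h2 h3 hL0 hR2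
        (Finset.single_le_sum (f := fun j => (z j)^2)
          (fun j _ => sq_nonneg _) (Finset.mem_univ i))
        (Finset.single_le_sum (f := fun j => ((alphaT t * z j - x j)/sigmaT t)^2)
          (fun j _ => sq_nonneg _) (Finset.mem_univ i))
        hSznn hSunn hcase
    -- monomial bound
    have hmono : |∏ i, ((alphaT t * z i - x i)/sigmaT t)^ v i| ≤
        Real.exp (2*(n:ℝ)^2 + (∑ j, ((alphaT t * z j - x j)/sigmaT t)^2)/8) := by
      rw [Finset.abs_prod]
      calc ∏ i, |((alphaT t * z i - x i)/sigmaT t)^ v i|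
          = ∏ i, |(alphaT t * z i - x i)/sigmaT t| ^ v i := by simp [abs_pow]
        _ ≤ ∏ i, Real.exp (2*((v i : ℕ) : ℝ)^2 + ((alphaT t * z i - x i)/sigmaT t)^2/8) :=
            Finset.prod_le_prod (fun i _ => by positivity)
              (fun i _ => aux_abs_pow_le_exp (v i) _)
        _ = Real.exp (∑ i, (2*((v i : ℕ) : ℝ)^2 + ((alphaT t * z i - x i)/sigmaT t)^2/8)) :=
            (Real.exp_sum _ _).symm
        _ ≤ Real.exp (2*(n:ℝ)^2 + (∑ j, ((alphaT t * z j - x j)/sigmaT t)^2)/8) := by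
            apply Real.exp_le_exp.mpr
            rw [Finset.sum_add_distrib, ← Finset.sum_div]
            have hnat : (∑ i, (v i)^2) ≤ n^2 := by
              calc ∑ i, (v i)^2 = ∑ i, v i * v i := by simp [sq]
                _ ≤ ∑ i, v i * (∑ j, v j) := Finset.sum_le_sum (fun i _ =>
                    Nat.mul_le_mul_left _ (Finset.single_le_sum
                      (fun _ _ => Nat.zero_le _) (Finset.mem_univ i)))
                _ = (∑ i, v i) * (∑ j, v j) := by rw [← Finset.sum_mul]
                _ ≤ n * n := Nat.mul_le_mul hv hv
                _ = n^2 := (sq n).symm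
            have hcast : (∑ i, ((v i : ℕ) : ℝ)^2) ≤ (n:ℝ)^2 := by exact_mod_cast hnat
            rw [← Finset.mul_sum]
            linarith
    -- gaussian kernel rewrite
    have hgK : gaussKernel d t z x =
        c₀ * Real.exp (-(∑ j, ((alphaT t * z j - x j)/sigmaT t)^2)/2) := by
      have hrw : ∑ j, ((alphaT t * z j - x j)/sigmaT t)^2
          = (∑ i, (alphaT t * z i - x i)^2)/sigmaT t^2 := by
        simp_rw [div_pow]
        rw [← Finset.sum_div]
      unfold gaussKernel norm2
      rw [Real.sq_sqrt (Finset.sum_nonneg fun i _ => sq_nonneg _)]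
      rw [hc₀_def]
      congr 1
      congr 1
      rw [hrw]
      ring
    -- tail bound
    have hp_le : p z y ≤ C₁ * Real.exp (-(C₂ * (∑ j, (z j)^2)) / 2) := by
      have htail := hA1.tail z y hy
      unfold norm2 at htail
      rw [Real.sq_sqrt (Finset.sum_nonneg fun i _ => sq_nonneg _), neg_mul] at htail
      exact htail
    -- combine
    calc f z ≤ Real.exp (2*(n:ℝ)^2 + (∑ j, ((alphaT t * z j - x j)/sigmaT t)^2)/8) *
          (C₁ * Real.exp (-(C₂ * (∑ j, (z j)^2)) / 2) *
            (c₀ * Real.exp (-(∑ j, ((alphaT t * z j - x j)/sigmaT t)^2)/2))) := by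
          simp only [hf_def]
          rw [hgK]
          exact mul_le_mul hmono
            (mul_le_mul_of_nonneg_right hp_le (mul_nonneg hc₀.le (Real.exp_pos _).le))
            (mul_nonneg (hp_nonneg z) (mul_nonneg hc₀.le (Real.exp_pos _).le))
            (Real.exp_pos _).le
      _ ≤ bound z := by
        have hprodgi : ∏ i, gi i (z i) =
            Real.exp (-(C₂ * (∑ j, (z j)^2)/4 +
              (∑ j, ((alphaT t * z j - x j)/sigmaT t)^2)/8)) := by
          simp only [hgi_def]
          rw [← Real.exp_sum]
          congr 1
          rw [Finset.sum_neg_distrib]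
          congr 1
          rw [Finset.sum_add_distrib, ← Finset.sum_div, ← Finset.sum_div, ← Finset.mul_sum]
        simp only [hbound_def]
        rw [hprodgi]
        exact aux_exp_combine C₁ c₀ (2*(n:ℝ)^2) (c*Cnd^2*L)
          (C₂ * (∑ j, (z j)^2)) (∑ j, ((alphaT t * z j - x j)/sigmaT t)^2)
          hC₁.le hc₀.le hsumkey
  -- integrability of the bound
  have hgi_int : ∀ i, Integrable (gi i) := fun i => by
    rw [hgi_def]
    exact aux_integrable_coord C₂ (sigmaT t) (alphaT t) (x i) hC₂
  have hprod_int : Integrable (fun z : Fin d → ℝ => ∏ i, gi i (z i)) :=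
    Integrable.fintype_prod hgi_int
  have hbound_int : Integrable bound := by
    rw [hbound_def]
    exact (hprod_int.const_mul _).const_mul _
  have hf_intOn : IntegrableOn f Sᶜ := by
    refine Integrable.mono' hbound_int.restrict
      hf_meas.aestronglyMeasurable.restrict ?_
    refine (ae_restrict_iff' hS.compl).mpr (ae_of_all _ fun z hz => ?_)
    rw [Real.norm_eq_abs, abs_of_nonneg (hf_nonneg z)]
    exact hptwise z hz
  -- final chain
  calc (∫ z in Sᶜ, f z) ≤ ∫ z in Sᶜ, bound z :=
      setIntegral_mono_on hf_intOn hbound_int.integrableOn hS.compl hptwise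
    _ ≤ ∫ z, bound z :=
      setIntegral_le_integral hbound_int (ae_of_all _ fun z => by
        simp only [hbound_def]
        exact mul_nonneg (mul_nonneg (Real.exp_pos _).le
          (mul_nonneg hC₁.le (Real.exp_pos _).le))
          (mul_nonneg hc₀.le (Finset.prod_nonneg fun i _ => hgi_nonneg i (z i))))
    _ = Real.exp (-(c*Cnd^2*L)) * (C₁ * Real.exp (2*(n:ℝ)^2)) *
        (c₀ * ∏ i, ∫ s, gi i s) := by
      simp only [hbound_def]
      rw [integral_const_mul, integral_const_mul, integral_fintype_prod_volume_eq_prod]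
    _ ≤ Real.exp (-(c*Cnd^2*L)) * (C₁ * Real.exp (2*(n:ℝ)^2)) * M₁^d := by
      apply mul_le_mul_of_nonneg_left ?_
        (mul_nonneg (Real.exp_pos _).le (mul_nonneg hC₁.le (Real.exp_pos _).le))
      have hc₀eq : c₀ = ((sigmaT t * Real.sqrt (2*Real.pi))⁻¹)^d := by
        rw [hc₀_def,
          show ((2:ℝ)*Real.pi) ^ ((d:ℝ)/2) = (Real.sqrt (2*Real.pi))^d from ?_,
          ← mul_pow, ← inv_pow]
        rw [Real.sqrt_eq_rpow, ← Real.rpow_natCast ((2*Real.pi) ^ ((1:ℝ)/2)) d,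
          ← Real.rpow_mul (by positivity)]
        congr 1
        ring
      have hsplit : c₀ * ∏ i, ∫ s, gi i s =
          ∏ i : Fin d, ((sigmaT t * Real.sqrt (2*Real.pi))⁻¹ * ∫ s, gi i s) := by
        rw [hc₀eq, Finset.prod_mul_distrib, Finset.prod_const, Finset.card_univ,
          Fintype.card_fin]
      rw [hsplit]
      calc ∏ i : Fin d, ((sigmaT t * Real.sqrt (2*Real.pi))⁻¹ * ∫ s, gi i s)
          ≤ ∏ _i : Fin d, M₁ :=
            Finset.prod_le_prod
              (fun i _ => mul_nonneg (by positivity)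
                (integral_nonneg fun s => hgi_nonneg i s))
              (fun i _ => by
                simp only [hgi_def, hM₁_def, hminC_def]
                exact aux_coord_bound C₂ (sigmaT t) (alphaT t) (x i) hC₂ hσ hα h1)
        _ = M₁^d := by rw [Finset.prod_const, Finset.card_univ, Fintype.card_fin]
    _ ≤ ε := by
      rw [show Real.exp (-(c*Cnd^2*L)) * (C₁ * Real.exp (2*(n:ℝ)^2)) * M₁^d =
          Real.exp (-(c*Cnd^2*L)) * K₀ by rw [hK₀_def]; ring]
      have hmax0 : 0 ≤ max (Real.log K₀) 0 := le_max_right _ _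
      have hKle : K₀ ≤ Real.exp (max (Real.log K₀) 0) := by
        calc K₀ = Real.exp (Real.log K₀) := (Real.exp_log hK₀).symm
          _ ≤ _ := Real.exp_le_exp.mpr (le_max_left _ _)
      calc Real.exp (-(c*Cnd^2*L)) * K₀
          ≤ Real.exp (-(L + max (Real.log K₀) 0)) * Real.exp (max (Real.log K₀) 0) := by
            apply mul_le_mul ?_ hKle hK₀.le (Real.exp_pos _).le
            exact Real.exp_le_exp.mpr (aux_final c Cnd L _ hCndsq hL1 hmax0)
        _ = Real.exp (-L) := by rw [← Real.exp_add]; congr 1; ring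
        _ = ε := hexpL


end CDM
end
end

section
/- Suppose Assumption (A2) holds. Then for every x ∈ ℝ^d, every y ∈ [0,1]^{d_y} and every t > 0: C ≤ h(x,y,t) ≤ B, and ‖(σ̂_t/α̂_t) · ∇_x h(x,y,t)‖_∞ ≤ √(2/π) · B. -/
open MeasureTheory

noncomputable section

namespace CDM

section Statement13Aux
open Real Filter Finset

noncomputable def g1 (s u : ℝ) : ℝ := (Real.sqrt (2*π) * s)⁻¹ * Real.exp (-u^2/(2*s^2))

variable {s : ℝ}

lemma g1_eq (hs : 0 < s) (u : ℝ) :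
    g1 s u = (Real.sqrt (2*π) * s)⁻¹ * Real.exp (-(2*s^2)⁻¹ * u^2) := by
  have : -u^2/(2*s^2) = -(2*s^2)⁻¹ * u^2 := by ring
  rw [g1, this]

lemma g1_pos (hs : 0 < s) (u : ℝ) : 0 < g1 s u := by
  have h1 : 0 < Real.sqrt (2*π) := Real.sqrt_pos.2 (by positivity)
  exact mul_pos (inv_pos.2 (by positivity)) (Real.exp_pos _)

lemma continuous_g1 : Continuous (g1 s) := by
  apply continuous_const.mul
  exact (Continuous.div_const (continuous_pow 2).neg _).rexp

lemma integrable_g1 (hs : 0 < s) : Integrable (g1 s) := by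
  have hb : (0:ℝ) < (2*s^2)⁻¹ := by positivity
  have := (integrable_exp_neg_mul_sq hb).const_mul (Real.sqrt (2*π) * s)⁻¹
  exact this.congr (by filter_upwards with u; rw [g1_eq hs])

lemma integrable_abs_g1 (hs : 0 < s) : Integrable (fun u => |u| * g1 s u) := by
  have hb : (0:ℝ) < (2*s^2)⁻¹ := by positivity
  have h := ((integrable_mul_exp_neg_mul_sq hb).norm.const_mul (Real.sqrt (2*π) * s)⁻¹)
  apply h.congr
  filter_upwards with u
  rw [g1_eq hs, norm_mul, Real.norm_eq_abs, Real.norm_eq_abs,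
    abs_of_pos (Real.exp_pos _)]
  ring

lemma integral_g1 (hs : 0 < s) : ∫ u, g1 s u = 1 := by
  have hb : (0:ℝ) < (2*s^2)⁻¹ := by positivity
  have : ∫ u, g1 s u = (Real.sqrt (2*π) * s)⁻¹ * ∫ u, Real.exp (-(2*s^2)⁻¹ * u^2) := by
    rw [← integral_const_mul]; congr 1; funext u; rw [g1_eq hs]
  rw [this, integral_gaussian]
  rw [show π / (2*s^2)⁻¹ = (2*π)*s^2 by field_simp]
  have h1 : 0 < Real.sqrt (2*π) := Real.sqrt_pos.2 (by positivity)
  have h2 : Real.sqrt (2*π*s^2) = Real.sqrt (2*π) * s := by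
    rw [show (2*π*s^2) = (2*π)*s^2 from by ring, Real.sqrt_mul (by positivity),
      Real.sqrt_sq hs.le]
  rw [h2]
  field_simp

lemma integral_Ioi_mul_exp (b : ℝ) (hb : 0 < b) :
    ∫ u in Set.Ioi (0:ℝ), u * Real.exp (-b*u^2) = (2*b)⁻¹ := by
  have hderiv : ∀ u ∈ Set.Ici (0:ℝ), HasDerivAt (fun u => -(2*b)⁻¹ * Real.exp (-b*u^2))
      (u * Real.exp (-b*u^2)) u := by
    intro u _
    have h : HasDerivAt (fun u : ℝ => -b*u^2) (-b*(2*u)) u := by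
      simpa using ((hasDerivAt_pow 2 u).const_mul (-b))
    refine (h.exp.const_mul (-(2*b)⁻¹)).congr_deriv ?_
    field_simp
  have hint : IntegrableOn (fun u : ℝ => u * Real.exp (-b*u^2)) (Set.Ioi 0) :=
    (integrable_mul_exp_neg_mul_sq hb).integrableOn
  have htend : Tendsto (fun u : ℝ => -(2*b)⁻¹ * Real.exp (-b*u^2)) atTop (nhds 0) := by
    have h0 : Tendsto (fun u : ℝ => Real.exp (-b * u^2)) atTop (nhds 0) := by
      apply Real.tendsto_exp_atBot.comp
      have h : Tendsto (fun u:ℝ => b * u^2) atTop atTop :=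
        (tendsto_pow_atTop (by norm_num)).const_mul_atTop hb
      simpa [neg_mul, Function.comp_def] using (tendsto_neg_atTop_atBot.comp h)
    simpa using h0.const_mul (-(2*b)⁻¹)
  have := MeasureTheory.integral_Ioi_of_hasDerivAt_of_tendsto' hderiv hint htend
  rw [this]; simp

lemma integral_abs_g1 (hs : 0 < s) : ∫ u, |u| * g1 s u = Real.sqrt (2/π) * s := by
  have hb : (0:ℝ) < (2*s^2)⁻¹ := by positivity
  have key : ∫ u, |u| * g1 s u = 2 * ∫ u in Set.Ioi (0:ℝ), u * g1 s u := by
    rw [← integral_comp_abs (f := fun u => u * g1 s u)]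
    congr 1; funext u
    have : g1 s |u| = g1 s u := by rw [g1, g1, sq_abs]
    rw [this]
  rw [key]
  have : ∀ u ∈ Set.Ioi (0:ℝ), u * g1 s u
      = (Real.sqrt (2*π) * s)⁻¹ * (u * Real.exp (-(2*s^2)⁻¹*u^2)) := by
    intro u _; rw [g1_eq hs]; ring
  rw [setIntegral_congr_fun measurableSet_Ioi this, integral_const_mul,
    integral_Ioi_mul_exp _ hb]
  have h2 : (2 * (2*s^2)⁻¹)⁻¹ = s^2 := by field_simp
  rw [h2]
  have h1 : 0 < Real.sqrt (2*π) := Real.sqrt_pos.2 (by positivity)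
  have hsq : Real.sqrt (2/π) * Real.sqrt (2*π) = 2 := by
    rw [← Real.sqrt_mul (by positivity)]
    rw [show 2/π*(2*π) = 2^2 by field_simp]
    exact Real.sqrt_sq (by norm_num)
  have h3 : Real.sqrt (2/π) = 2 / Real.sqrt (2*π) := by
    field_simp [h1.ne'] at hsq ⊢
    linarith [hsq]
  rw [h3]
  field_simp




noncomputable def Gd (d : ℕ) (s : ℝ) (v : Fin d → ℝ) : ℝ := ∏ i, g1 s (v i)

variable {d : ℕ} {s : ℝ}

lemma Gd_pos (hs : 0 < s) (v : Fin d → ℝ) : 0 < Gd d s v :=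
  Finset.prod_pos fun i _ => g1_pos hs _

lemma continuous_Gd : Continuous (Gd d s) :=
  continuous_finset_prod _ fun i _ => continuous_g1.comp (continuous_apply i)

lemma integrable_Gd (hs : 0 < s) : Integrable (Gd d s) :=
  Integrable.fintype_prod (f := fun _ : Fin d => g1 s) fun _ => integrable_g1 hs

lemma integral_Gd (hs : 0 < s) : ∫ v, Gd d s v = 1 := by
  have : ∫ v : Fin d → ℝ, ∏ i, (fun _ : Fin d => g1 s) i (v i) = ∏ _i : Fin d, ∫ u, g1 s u :=
    MeasureTheory.integral_fintype_prod_eq_prod (ι := Fin d) (f := fun _ => g1 s)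
  simpa [Gd, integral_g1 hs] using this

lemma mul_prod_eq_prod_ite (j : Fin d) (h0 h1 : ℝ → ℝ) (v : Fin d → ℝ) (c : ℝ)
    (hc : h1 (v j) = c * h0 (v j)) :
    c * ∏ i, h0 (v i) = ∏ i, if i = j then h1 (v i) else h0 (v i) := by
  rw [← Finset.mul_prod_erase Finset.univ (fun i => h0 (v i)) (Finset.mem_univ j),
      ← Finset.mul_prod_erase Finset.univ (fun i => if i = j then h1 (v i) else h0 (v i))
        (Finset.mem_univ j), if_pos rfl, hc, ← mul_assoc]
  congr 1
  exact (Finset.prod_congr rfl fun i hi => if_neg (Finset.ne_of_mem_erase hi)).symm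

lemma integrable_ite_prod (j : Fin d) (h0 h1 : ℝ → ℝ) (H0 : Integrable h0)
    (H1 : Integrable h1) :
    Integrable (fun v : Fin d → ℝ => ∏ i, if i = j then h1 (v i) else h0 (v i)) := by
  have := Integrable.fintype_prod (f := fun i : Fin d => if i = j then h1 else h0) (μ := fun _ => volume)
    (fun i => by by_cases h : i = j <;> simp [h, H0, H1])
  apply this.congr
  filter_upwards with v
  exact Finset.prod_congr rfl fun i _ => by by_cases h : i = j <;> simp [h]

lemma integral_ite_prod (j : Fin d) (h0 h1 : ℝ → ℝ) (H0 : ∫ u, h0 u = 1) :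
    ∫ v : Fin d → ℝ, ∏ i, (if i = j then h1 (v i) else h0 (v i)) = ∫ u, h1 u := by
  have e1 : ∀ v : Fin d → ℝ, (∏ i, if i = j then h1 (v i) else h0 (v i))
      = ∏ i, (fun i : Fin d => if i = j then h1 else h0) i (v i) := by
    intro v
    exact Finset.prod_congr rfl fun i _ => by by_cases h : i = j <;> simp [h]
  simp_rw [e1]
  rw [MeasureTheory.volume_pi, MeasureTheory.integral_fintype_prod_eq_prod (ι := Fin d) (f := fun i => if i = j then h1 else h0) (μ := fun _ => volume)]
  rw [← Finset.mul_prod_erase Finset.univ _ (Finset.mem_univ j), if_pos rfl]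
  have : ∏ i ∈ Finset.univ.erase j, (∫ u, (if i = j then h1 else h0) u) = 1 := by
    apply Finset.prod_eq_one
    intro i hi
    simp only [if_neg (Finset.ne_of_mem_erase hi)]
    exact H0
  rw [this, mul_one]

lemma integrable_abs_Gd (hs : 0 < s) (j : Fin d) :
    Integrable (fun v : Fin d → ℝ => |v j| * Gd d s v) := by
  have := integrable_ite_prod j (g1 s) (fun u => |u| * g1 s u) (integrable_g1 hs)
    (integrable_abs_g1 hs)
  apply this.congr
  filter_upwards with v
  exact (mul_prod_eq_prod_ite j (g1 s) (fun u => |u| * g1 s u) v _ rfl).symm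

lemma integral_abs_Gd (hs : 0 < s) (j : Fin d) :
    ∫ v : Fin d → ℝ, |v j| * Gd d s v = Real.sqrt (2/π) * s := by
  have e : ∀ v : Fin d → ℝ, |v j| * Gd d s v
      = ∏ i, if i = j then |v i| * g1 s (v i) else g1 s (v i) :=
    fun v => mul_prod_eq_prod_ite j (g1 s) (fun u => |u| * g1 s u) v _ rfl
  simp_rw [e]
  rw [integral_ite_prod j (g1 s) (fun u => |u| * g1 s u) (integral_g1 hs)]
  exact integral_abs_g1 hs

lemma Gd_eq (hs : 0 < s) (v : Fin d → ℝ) :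
    Gd d s v = ((Real.sqrt (2*π) * s)⁻¹)^d * Real.exp (-(∑ i, v i ^2)/(2*s^2)) := by
  rw [Gd]
  have : ∀ i ∈ Finset.univ (α := Fin d), g1 s (v i)
      = (Real.sqrt (2*π) * s)⁻¹ * Real.exp (-(v i ^2)/(2*s^2)) := fun i _ => rfl
  rw [Finset.prod_congr rfl this, Finset.prod_mul_distrib, Finset.prod_const,
    ← Real.exp_sum]
  congr 2
  · simp
  rw [← Finset.sum_div, ← Finset.sum_neg_distrib]



section Core

variable {d : ℕ} {s a Bg Cg : ℝ}

lemma sub_smul_apply (a : ℝ) (x z : Fin d → ℝ) (i : Fin d) :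
    (z - a • x) i = z i - a * x i := by simp

/-- operator norm bound for `∑ c i • proj i`. -/
lemma norm_sum_proj_le (c : Fin d → ℝ) :
    ‖∑ i, c i • (ContinuousLinearMap.proj (R := ℝ) (φ := fun _ : Fin d => ℝ) i)‖
      ≤ ∑ i, |c i| := by
  apply ContinuousLinearMap.opNorm_le_bound _ (by positivity)
  intro e
  simp only [ContinuousLinearMap.coe_sum', Finset.sum_apply, ContinuousLinearMap.smul_apply,
    ContinuousLinearMap.proj_apply, smul_eq_mul, Real.norm_eq_abs]
  calc |∑ i, c i * e i| ≤ ∑ i, |c i * e i| := Finset.abs_sum_le_sum_abs _ _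
    _ ≤ ∑ i, |c i| * ‖e‖ := by
        refine Finset.sum_le_sum fun i _ => ?_
        rw [abs_mul]
        exact mul_le_mul_of_nonneg_left ((Real.norm_eq_abs (e i)) ▸ norm_le_pi_norm e i)
          (abs_nonneg _)
    _ = (∑ i, |c i|) * ‖e‖ := by rw [Finset.sum_mul]

lemma sq_lower (u v k : ℝ) (h : |u - v| ≤ k) : u^2/2 - k^2 ≤ v^2 := by
  have h2 : (u-v)^2 ≤ k^2 := by
    rw [← sq_abs (u-v)]
    exact pow_le_pow_left₀ (abs_nonneg _) h 2
  nlinarith [sq_nonneg (u - 2*v)]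

/-- The derivative of `x ↦ g z * Gd d s (z - a • x)`. -/
noncomputable def Fder (s a : ℝ) (g : (Fin d → ℝ) → ℝ) (x z : Fin d → ℝ) :
    (Fin d → ℝ) →L[ℝ] ℝ :=
  (g z * Gd d s (z - a • x) * (a/s^2)) •
    (∑ i, (z i - a * x i) • (ContinuousLinearMap.proj (R := ℝ) (φ := fun _ : Fin d => ℝ) i))

lemma hasFDerivAt_core (hs : 0 < s) (g : (Fin d → ℝ) → ℝ) (z x : Fin d → ℝ) :
    HasFDerivAt (fun x => g z * Gd d s (z - a • x)) (Fder s a g x z) x := by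
  have hfun : (fun x : Fin d → ℝ => g z * Gd d s (z - a • x))
      = fun x => (g z * ((Real.sqrt (2*π) * s)⁻¹)^d) *
          Real.exp ((-(2*s^2)⁻¹) * ∑ i, (z i - a * x i)^2) := by
    funext x
    rw [Gd_eq hs]
    simp only [sub_smul_apply]
    rw [show (-(2*s^2)⁻¹) * ∑ i, (z i - a * x i)^2 = -(∑ i, (z i - a * x i)^2)/(2*s^2) by ring]
    ring
  rw [hfun]
  have hu : HasFDerivAt (fun x : Fin d → ℝ => ∑ i, (z i - a * x i)^2)
      (∑ i, ((z i - a * x i) • (-(a • (ContinuousLinearMap.proj (R := ℝ)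
          (φ := fun _ : Fin d => ℝ) i))) + (z i - a * x i) • (-(a • (ContinuousLinearMap.proj
          (R := ℝ) (φ := fun _ : Fin d => ℝ) i))))) x := by
    apply HasFDerivAt.fun_sum
    intro i _
    have hp : HasFDerivAt (fun x : Fin d → ℝ => x i)
        (ContinuousLinearMap.proj (R := ℝ) (φ := fun _ : Fin d => ℝ) i) x :=
      (ContinuousLinearMap.proj (R := ℝ) (φ := fun _ : Fin d => ℝ) i).hasFDerivAt
    have hm : HasFDerivAt (fun x : Fin d → ℝ => z i - a * x i)
        (-(a • (ContinuousLinearMap.proj (R := ℝ) (φ := fun _ : Fin d => ℝ) i))) x :=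
      (hp.const_mul a).const_sub (z i)
    have hsq := hm.mul hm
    have hfn : (fun x : Fin d → ℝ => (z i - a * x i)^2)
        = fun x => (z i - a * x i) * (z i - a * x i) := by funext x; ring
    rw [hfn]
    exact hsq
  have hE := ((hu.const_mul ((-(2*s^2)⁻¹))).exp).const_mul
    (g z * ((Real.sqrt (2*π) * s)⁻¹)^d)
  refine hE.congr_fderiv ?_
  symm
  rw [Fder]
  ext e
  rw [Gd_eq hs]
  rw [show (∑ i, ((z - a • x) i)^2) = ∑ i, (z i - a * x i)^2 from
    Finset.sum_congr rfl fun i _ => by rw [sub_smul_apply]]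
  rw [show -(∑ i, (z i - a * x i)^2)/(2*s^2) = (-(2*s^2)⁻¹) * ∑ i, (z i - a * x i)^2 by ring]
  set E := Real.exp ((-(2*s^2)⁻¹) * ∑ i, (z i - a * x i)^2) with hEdef
  simp only [ContinuousLinearMap.smul_apply, ContinuousLinearMap.coe_sum',
    Finset.sum_apply, ContinuousLinearMap.proj_apply, ContinuousLinearMap.add_apply,
    ContinuousLinearMap.neg_apply, smul_eq_mul, Finset.mul_sum]
  apply Finset.sum_congr rfl
  intro i _
  ring


variable (s a : ℝ)

/-- bound function for domination -/
noncomputable def B0 (d : ℕ) (s a : ℝ) (w : Fin d → ℝ) : ℝ :=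
  (∑ i, (|w i| + a)) * Gd d (Real.sqrt 2 * s) w

lemma sqrt2s_pos (hs : 0 < s) : 0 < Real.sqrt 2 * s := by positivity

lemma integrable_B0 {d : ℕ} (hs : 0 < s) (ha : 0 ≤ a) : Integrable (B0 d s a) := by
  have hs' : 0 < Real.sqrt 2 * s := sqrt2s_pos s hs
  have heq : B0 d s a = fun w => (∑ i, |w i| * Gd d (Real.sqrt 2 * s) w)
      + (d * a) * Gd d (Real.sqrt 2 * s) w := by
    funext w
    rw [B0, Finset.sum_add_distrib, Finset.sum_const, add_mul, Finset.sum_mul]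
    simp [mul_assoc]
  rw [heq]
  exact (integrable_finset_sum _ fun i _ => integrable_abs_Gd hs' i).add
    ((integrable_Gd hs').const_mul _)

/-- pointwise exp product bound -/
lemma Gd_le_B0aux {d : ℕ} (hs : 0 < s) (x x₀ z : Fin d → ℝ) (hx : ∀ i, |x i - x₀ i| ≤ 1)
    (ha : 0 ≤ a) :
    Gd d s (z - a • x) ≤ (Real.sqrt 2)^d * (Real.exp (a^2/(2*s^2)))^d
      * Gd d (Real.sqrt 2 * s) (z - a • x₀) := by
  have hs' : 0 < Real.sqrt 2 * s := sqrt2s_pos s hs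
  rw [Gd_eq hs, Gd_eq hs']
  have hsum : (∑ i, ((z - a • x₀) i)^2)/2 - d * a^2 ≤ ∑ i, ((z - a • x) i)^2 := by
    have : ∀ i ∈ Finset.univ (α := Fin d),
        ((z - a • x₀) i)^2/2 - a^2 ≤ ((z - a • x) i)^2 := by
      intro i _
      rw [sub_smul_apply, sub_smul_apply]
      apply sq_lower
      have : (z i - a * x₀ i) - (z i - a * x i) = a * (x i - x₀ i) := by ring
      rw [this, abs_mul, abs_of_nonneg ha]
      calc a * |x i - x₀ i| ≤ a * 1 := by
            exact mul_le_mul_of_nonneg_left (hx i) ha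
        _ = a := mul_one a
    have h2 := Finset.sum_le_sum this
    calc (∑ i, ((z - a • x₀) i)^2)/2 - d * a^2
        = ∑ i, (((z - a • x₀) i)^2/2 - a^2) := by
          rw [Finset.sum_sub_distrib, Finset.sum_const, Finset.sum_div]
          simp [nsmul_eq_mul]
      _ ≤ _ := h2
  have hexp : Real.exp (-(∑ i, ((z - a • x) i)^2)/(2*s^2))
      ≤ Real.exp (d * a^2/(2*s^2)) * Real.exp (-(∑ i, ((z - a • x₀) i)^2)/(2*(Real.sqrt 2 * s)^2)) := by
    rw [← Real.exp_add]
    apply Real.exp_le_exp.2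
    have h2 : (Real.sqrt 2 * s)^2 = 2 * s^2 := by
      rw [mul_pow, Real.sq_sqrt (by norm_num : (0:ℝ) ≤ 2)]
    rw [h2]
    have hpos : (0:ℝ) < 2 * s^2 := by positivity
    have key : (-∑ i, ((z - a • x) i)^2)
        ≤ (d:ℝ)*a^2 + (-∑ i, ((z - a • x₀) i)^2)/2 := by linarith [hsum]
    calc (-∑ i, ((z - a • x) i)^2)/(2*s^2)
        ≤ ((d:ℝ)*a^2 + (-∑ i, ((z - a • x₀) i)^2)/2)/(2*s^2) :=
          (div_le_div_iff_of_pos_right hpos).2 key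
      _ = (d:ℝ)*a^2/(2*s^2) + (-∑ i, ((z - a • x₀) i)^2)/(2*(2*s^2)) := by ring
  calc ((Real.sqrt (2*π) * s)⁻¹)^d * Real.exp (-(∑ i, ((z - a • x) i)^2)/(2*s^2))
      ≤ ((Real.sqrt (2*π) * s)⁻¹)^d * (Real.exp (d * a^2/(2*s^2))
          * Real.exp (-(∑ i, ((z - a • x₀) i)^2)/(2*(Real.sqrt 2 * s)^2))) := by
        apply mul_le_mul_of_nonneg_left hexp (by positivity)
    _ = (Real.sqrt 2)^d * (Real.exp (a^2/(2*s^2)))^d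
        * (((Real.sqrt (2*π) * (Real.sqrt 2 * s))⁻¹)^d
          * Real.exp (-(∑ i, ((z - a • x₀) i)^2)/(2*(Real.sqrt 2 * s)^2))) := by
        rw [← Real.exp_nat_mul]
        rw [show ((d:ℝ) * (a^2/(2*s^2))) = d * a^2/(2*s^2) by ring]
        have h2 : ((Real.sqrt (2*π) * (Real.sqrt 2 * s))⁻¹)^d
            = ((Real.sqrt 2)⁻¹)^d * ((Real.sqrt (2*π) * s)⁻¹)^d := by
          rw [← mul_pow]
          congr 1
          rw [mul_inv, mul_inv]
          ring
        rw [h2]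
        have h3 : (Real.sqrt 2)^d * ((Real.sqrt 2)⁻¹)^d = 1 := by
          rw [← mul_pow, mul_inv_cancel₀ (by positivity), one_pow]
        linear_combination (-(((Real.sqrt (2*π) * s)⁻¹)^d
          * Real.exp ((d:ℝ) * a^2 / (2*s^2))
          * Real.exp (-(∑ i, ((z - a • x₀) i)^2)/(2*(Real.sqrt 2 * s)^2)))) * h3


lemma norm_Fder_le {d : ℕ} (hs : 0 < s) (ha : 0 < a) {Bg : ℝ} (g : (Fin d → ℝ) → ℝ)
    (hgB : ∀ z, |g z| ≤ Bg) (x x₀ z : Fin d → ℝ) (hx : ∀ i, |x i - x₀ i| ≤ 1) :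
    ‖Fder s a g x z‖ ≤ (Bg * (a/s^2) * ((Real.sqrt 2)^d * (Real.exp (a^2/(2*s^2)))^d))
      * B0 d s a (z - a • x₀) := by
  have hBg0 : 0 ≤ Bg := le_trans (abs_nonneg _) (hgB 0)
  have t1 : ‖Fder s a g x z‖
      ≤ (|g z| * Gd d s (z - a • x) * (a/s^2)) * ∑ i, |z i - a * x i| := by
    rw [Fder]
    refine (norm_smul_le (g z * Gd d s (z - a • x) * (a/s^2))
      (∑ i, (z i - a * x i) • (ContinuousLinearMap.proj (R := ℝ)
        (φ := fun _ : Fin d => ℝ) i))).trans ?_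
    rw [Real.norm_eq_abs, abs_mul, abs_mul, abs_of_pos (Gd_pos hs _),
      abs_of_pos (div_pos ha (by positivity))]
    exact mul_le_mul_of_nonneg_left (norm_sum_proj_le _)
      (mul_nonneg (mul_nonneg (abs_nonneg _) (Gd_pos hs _).le)
        (div_pos ha (by positivity)).le)
  have t2 : ∑ i, |z i - a * x i| ≤ ∑ i, (|(z - a • x₀) i| + a) := by
    refine Finset.sum_le_sum fun i _ => ?_
    rw [sub_smul_apply]
    calc |z i - a * x i| = |(z i - a * x₀ i) + (a * (x₀ i - x i))| := by ring_nf
      _ ≤ |z i - a * x₀ i| + |a * (x₀ i - x i)| := abs_add_le _ _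
      _ ≤ |z i - a * x₀ i| + a := by
          rw [abs_mul, abs_of_pos ha]
          have : |x₀ i - x i| ≤ 1 := by rw [abs_sub_comm]; exact hx i
          nlinarith [ha]
  have t3 := Gd_le_B0aux s a hs x x₀ z hx ha.le
  calc ‖Fder s a g x z‖
      ≤ (|g z| * Gd d s (z - a • x) * (a/s^2)) * ∑ i, |z i - a * x i| := t1
    _ ≤ (Bg * ((Real.sqrt 2)^d * (Real.exp (a^2/(2*s^2)))^d
          * Gd d (Real.sqrt 2 * s) (z - a • x₀)) * (a/s^2)) * ∑ i, (|(z - a • x₀) i| + a) := by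
        have h1 : 0 ≤ Gd d s (z - a • x) := (Gd_pos hs _).le
        have h2 : (0:ℝ) ≤ a/s^2 := (div_pos ha (by positivity)).le
        have h4 : 0 ≤ ∑ i, |z i - a * x i| := Finset.sum_nonneg fun i _ => abs_nonneg _
        have h5 : 0 ≤ Gd d (Real.sqrt 2 * s) (z - a • x₀) := (Gd_pos (sqrt2s_pos s hs) _).le
        have h6 : (0:ℝ) ≤ (Real.sqrt 2)^d * (Real.exp (a^2/(2*s^2)))^d
            * Gd d (Real.sqrt 2 * s) (z - a • x₀) := by positivity
        refine mul_le_mul ?_ t2 h4 ?_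
        · exact mul_le_mul (mul_le_mul (hgB z) t3 h1 hBg0) le_rfl h2
            (mul_nonneg hBg0 h6)
        · exact mul_nonneg (mul_nonneg hBg0 h6) h2
    _ = (Bg * (a/s^2) * ((Real.sqrt 2)^d * (Real.exp (a^2/(2*s^2)))^d))
        * B0 d s a (z - a • x₀) := by rw [B0]; ring

lemma core {d : ℕ} (hs : 0 < s) (ha : 0 < a) {Bg Cg : ℝ} (g : (Fin d → ℝ) → ℝ)
    (hgc : Continuous g) (hgB : ∀ z, |g z| ≤ Bg) (hCg : ∀ z, Cg ≤ g z) (x₀ : Fin d → ℝ) :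
    Cg ≤ (∫ z, g z * Gd d s (z - a • x₀)) ∧ (∫ z, g z * Gd d s (z - a • x₀)) ≤ Bg ∧
    ∀ i, |s/a * (fderiv ℝ (fun x => ∫ z, g z * Gd d s (z - a • x)) x₀ (Pi.single i 1))|
      ≤ Real.sqrt (2/π) * Bg := by
  have hBg0 : 0 ≤ Bg := le_trans (abs_nonneg _) (hgB 0)
  have hGint : ∀ x : Fin d → ℝ, Integrable (fun z => Gd d s (z - a • x)) :=
    fun x => (integrable_Gd hs).comp_sub_right _
  have hcsh : ∀ x : Fin d → ℝ, Continuous (fun z : Fin d → ℝ => Gd d s (z - a • x)) :=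
    fun x => continuous_Gd.comp (continuous_id.sub continuous_const)
  have hint : ∀ x : Fin d → ℝ, Integrable (fun z => g z * Gd d s (z - a • x)) := by
    intro x
    refine Integrable.mono' ((hGint x).const_mul Bg)
      ((hgc.mul (hcsh x)).aestronglyMeasurable) ?_
    filter_upwards with z
    rw [Real.norm_eq_abs, abs_mul, abs_of_pos (Gd_pos hs _)]
    exact mul_le_mul_of_nonneg_right (hgB z) (Gd_pos hs _).le
  have hGint1 : ∀ x : Fin d → ℝ, ∫ z, Gd d s (z - a • x) = 1 :=
    fun x => (integral_sub_right_eq_self (Gd d s) (a • x)).trans (integral_Gd hs)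
  refine ⟨?_, ?_, ?_⟩
  · calc Cg = Cg * ∫ z, Gd d s (z - a • x₀) := by rw [hGint1 x₀, mul_one]
      _ = ∫ z, Cg * Gd d s (z - a • x₀) := (integral_const_mul _ _).symm
      _ ≤ ∫ z, g z * Gd d s (z - a • x₀) :=
          integral_mono ((hGint x₀).const_mul Cg) (hint x₀)
            (fun z => mul_le_mul_of_nonneg_right (hCg z) (Gd_pos hs _).le)
  · calc (∫ z, g z * Gd d s (z - a • x₀)) ≤ ∫ z, Bg * Gd d s (z - a • x₀) :=
          integral_mono (hint x₀) ((hGint x₀).const_mul Bg)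
            (fun z => mul_le_mul_of_nonneg_right (le_trans (le_abs_self _) (hgB z))
              (Gd_pos hs _).le)
      _ = Bg := by rw [integral_const_mul, hGint1 x₀, mul_one]
  · -- derivative part
    have hball : ∀ x ∈ Metric.ball x₀ 1, ∀ i, |x i - x₀ i| ≤ 1 := by
      intro x hx i
      have h1 := dist_le_pi_dist x x₀ i
      rw [Real.dist_eq] at h1
      exact h1.trans (le_of_lt (Metric.mem_ball.1 hx))
    have hbound_all : ∀ z : Fin d → ℝ, ∀ x ∈ Metric.ball x₀ 1, ‖Fder s a g x z‖
        ≤ (Bg * (a/s^2) * ((Real.sqrt 2)^d * (Real.exp (a^2/(2*s^2)))^d))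
          * B0 d s a (z - a • x₀) :=
      fun z x hx => norm_Fder_le s a hs ha g hgB x x₀ z (hball x hx)
    have hboundint : Integrable (fun z : Fin d → ℝ =>
        (Bg * (a/s^2) * ((Real.sqrt 2)^d * (Real.exp (a^2/(2*s^2)))^d))
          * B0 d s a (z - a • x₀)) :=
      ((integrable_B0 s a hs ha.le).comp_sub_right _).const_mul _
    have hF'cont : Continuous (fun z => Fder s a g x₀ z) := by
      apply Continuous.smul (f := fun z => g z * Gd d s (z - a • x₀) * (a/s^2))
      · exact (hgc.mul (hcsh x₀)).mul continuous_const
      · exact continuous_finset_sum _ fun i _ => Continuous.smul (f := fun z : Fin d → ℝ => z i - a * x₀ i)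
          (by fun_prop) continuous_const
    have hF'int : Integrable (fun z => Fder s a g x₀ z) :=
      Integrable.mono' hboundint hF'cont.aestronglyMeasurable
        (Filter.Eventually.of_forall fun z =>
          hbound_all z x₀ (Metric.mem_ball_self one_pos))
    have hderiv : HasFDerivAt (fun x => ∫ z, g z * Gd d s (z - a • x))
        (∫ z, Fder s a g x₀ z) x₀ :=
      hasFDerivAt_integral_of_dominated_of_fderiv_le (Metric.ball_mem_nhds x₀ one_pos)
        (Filter.Eventually.of_forall fun x => (hgc.mul (hcsh x)).aestronglyMeasurable)
        (hint x₀) hF'cont.aestronglyMeasurable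
        (Filter.Eventually.of_forall fun z x hx => hbound_all z x hx)
        hboundint
        (Filter.Eventually.of_forall fun z x _ => hasFDerivAt_core hs g z x)
    rw [hderiv.fderiv]
    intro i
    have happ : (∫ z, Fder s a g x₀ z) (Pi.single i 1)
        = ∫ z, (g z * Gd d s (z - a • x₀) * (a/s^2)) * (z i - a * x₀ i) := by
      rw [ContinuousLinearMap.integral_apply hF'int]
      congr 1; funext z
      rw [Fder]
      simp only [ContinuousLinearMap.smul_apply, ContinuousLinearMap.coe_sum',
        Finset.sum_apply, ContinuousLinearMap.smul_apply, ContinuousLinearMap.proj_apply,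
        smul_eq_mul, Pi.single_apply, mul_ite, mul_one, mul_zero]
      rw [Finset.sum_ite_eq' Finset.univ i (fun j => z j - a * x₀ j)]
      simp
    rw [happ]
    have hphi : Integrable (fun z : Fin d → ℝ =>
        (Bg/s) * (|(z - a • x₀) i| * Gd d s (z - a • x₀))) :=
      (((integrable_abs_Gd hs i).comp_sub_right (a • x₀)).const_mul _)
    have hptw : ∀ z : Fin d → ℝ,
        ‖s/a * ((g z * Gd d s (z - a • x₀) * (a/s^2)) * (z i - a * x₀ i))‖
        ≤ (Bg/s) * (|(z - a • x₀) i| * Gd d s (z - a • x₀)) := by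
      intro z
      have heq : ‖s/a * ((g z * Gd d s (z - a • x₀) * (a/s^2)) * (z i - a * x₀ i))‖
          = |g z| * ((1/s) * (|(z - a • x₀) i| * Gd d s (z - a • x₀))) := by
        rw [Real.norm_eq_abs, abs_mul, abs_mul, abs_mul, abs_mul,
          abs_of_pos (div_pos hs ha), abs_of_pos (div_pos ha (by positivity)),
          abs_of_pos (Gd_pos hs _), sub_smul_apply]
        field_simp
      rw [heq]
      have h1 : 0 ≤ (1/s) * (|(z - a • x₀) i| * Gd d s (z - a • x₀)) := by
        have := (Gd_pos (d := d) hs (z - a • x₀)).le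
        positivity
      calc |g z| * ((1/s) * (|(z - a • x₀) i| * Gd d s (z - a • x₀)))
          ≤ Bg * ((1/s) * (|(z - a • x₀) i| * Gd d s (z - a • x₀))) :=
            mul_le_mul_of_nonneg_right (hgB z) h1
        _ = (Bg/s) * (|(z - a • x₀) i| * Gd d s (z - a • x₀)) := by ring
    calc |s/a * ∫ z, (g z * Gd d s (z - a • x₀) * (a/s^2)) * (z i - a * x₀ i)|
        = ‖∫ z, s/a * ((g z * Gd d s (z - a • x₀) * (a/s^2)) * (z i - a * x₀ i))‖ := by
          rw [integral_const_mul, Real.norm_eq_abs]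
      _ ≤ ∫ z, (Bg/s) * (|(z - a • x₀) i| * Gd d s (z - a • x₀)) :=
          norm_integral_le_of_norm_le hphi (Filter.Eventually.of_forall hptw)
      _ = (Bg/s) * ∫ z, |(z - a • x₀) i| * Gd d s (z - a • x₀) := integral_const_mul _ _
      _ = (Bg/s) * (Real.sqrt (2/π) * s) := by
          rw [integral_sub_right_eq_self (fun w => |w i| * Gd d s w) (a • x₀),
            integral_abs_Gd hs i]
      _ = Real.sqrt (2/π) * Bg := by field_simp

end Core


lemma multiDeriv_zero (D : ℕ) (f : (Fin D → ℝ) → ℝ) : multiDeriv D (fun _ => 0) f = f := by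
  have h1 : (List.ofFn fun i : Fin D => (pderiv D i)^[(0:ℕ)])
      = List.replicate D (id : ((Fin D → ℝ) → ℝ) → ((Fin D → ℝ) → ℝ)) := by
    simp [List.ofFn_const]
  have h2 : ∀ n, ((List.replicate n
      (id : ((Fin D → ℝ) → ℝ) → ((Fin D → ℝ) → ℝ))).foldr (· ∘ ·) id) = id := by
    intro n
    induction n with
    | zero => rfl
    | succ n ih => rw [List.replicate_succ, List.foldr_cons, ih]; rfl
  rw [multiDeriv, h1, h2]; rfl

lemma continuous_append_left {d dy : ℕ} (y : Fin dy → ℝ) :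
    Continuous fun z : Fin d → ℝ => Fin.append z y := by
  apply continuous_pi
  intro j
  by_cases hj : (j : ℕ) < d
  · have h : (fun z : Fin d → ℝ => Fin.append z y j) = fun z => z (Fin.castLT j hj) := by
      funext z; simp [Fin.append, Fin.addCases, hj]
    rw [h]; exact continuous_apply _
  · have h : (fun z : Fin d → ℝ => Fin.append z y j)
        = fun _ => y (Fin.subNat d (Fin.cast (Nat.add_comm d dy) j) (le_of_not_gt hj)) := by
      funext z; simp [Fin.append, Fin.addCases, hj]
    rw [h]; exact continuous_const

lemma kernel_eq (d : ℕ) {s : ℝ} (hs : 0 < s) (v : Fin d → ℝ) :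
    ((2 * Real.pi) ^ ((d : ℝ) / 2) * s ^ d)⁻¹ * Real.exp (-norm2 v ^ 2 / (2*s^2))
      = Gd d s v := by
  have hp : ((2 * Real.pi) ^ ((d : ℝ) / 2) * s ^ d)⁻¹ = ((Real.sqrt (2*π) * s)⁻¹)^d := by
    have h1 : ((2:ℝ)*π) ^ ((d:ℝ)/2) = (Real.sqrt (2*π))^d := by
      rw [Real.sqrt_eq_rpow, ← Real.rpow_natCast ((2*π) ^ ((1:ℝ)/2)) d,
        ← Real.rpow_mul (by positivity)]
      congr 1
      ring
    rw [h1, ← mul_pow, ← inv_pow]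
  have hn : norm2 v ^ 2 = ∑ i, v i ^ 2 := by
    rw [norm2]; exact Real.sq_sqrt (by positivity)
  rw [Gd_eq hs, hp, hn]

end Statement13Aux

open Real in
/-- Lemma B.6: bounds on `h` and on its gradient under
Assumption (A2). -/
theorem statement13
    (d dy : ℕ) (hd : 1 ≤ d) (hdy : 1 ≤ dy)
    (β B C C₂ : ℝ)
    (f : (Fin d → ℝ) → (Fin dy → ℝ) → ℝ)
    (hA2 : AssumptionA2 d dy β B C C₂ f) :
    ∀ x : Fin d → ℝ, ∀ y : Fin dy → ℝ, InUnitCube dy y → ∀ t : ℝ, 0 < t →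
      C ≤ hFun d dy C₂ f t x y ∧ hFun d dy C₂ f t x y ≤ B ∧
      ∀ i, |sigmaHat C₂ t / alphaHat C₂ t *
          fderiv ℝ (fun x' => hFun d dy C₂ f t x' y) x (Pi.single i 1)|
        ≤ Real.sqrt (2 / Real.pi) * B := by
  intro x y hy t ht
  obtain ⟨q, hq, hqeq⟩ := hA2.holder
  obtain ⟨hqcd, b₁, b₂, hbB, hbd1, hbd2⟩ := hq
  have hC₂ := hA2.C2_pos
  have hσ : 0 < sigmaT t := by
    rw [sigmaT]
    apply Real.sqrt_pos.2
    have h1 : Real.exp (-t) < Real.exp 0 := Real.exp_lt_exp.2 (by linarith)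
    rw [Real.exp_zero] at h1
    linarith
  have hdenom : 0 < alphaT t ^ 2 + C₂ * sigmaT t ^ 2 := by
    have h1 : 0 < alphaT t := Real.exp_pos _
    have h2 : 0 ≤ C₂ * sigmaT t ^ 2 := mul_nonneg hC₂.le (sq_nonneg _)
    nlinarith
  have hs : 0 < sigmaHat C₂ t := by
    rw [sigmaHat]
    exact div_pos hσ (Real.sqrt_pos.2 hdenom)
  have ha : 0 < alphaHat C₂ t := by
    rw [alphaHat]
    exact div_pos (Real.exp_pos _) hdenom
  haveI hnsm : Nonempty (Fin (d + dy)) := ⟨⟨0, by omega⟩⟩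
  have hb2 : 0 ≤ b₂ := by
    have hxz : ((fun _ => (0:ℝ)) : Fin (d+dy) → ℝ) ≠ (fun _ => 1) := by
      intro h
      have := congrFun h ⟨0, by omega⟩
      norm_num at this
    have hk : (∑ i : Fin (d+dy), (fun j : Fin (d+dy) =>
        if j = (⟨0, by omega⟩ : Fin (d+dy)) then ⌊β⌋₊ else 0) i) = ⌊β⌋₊ := by
      simp
    have h2 := hbd2 _ hk (fun _ => 0) (fun _ => 1) hxz
    have h3 : normInf (((fun _ => (0:ℝ)) - (fun _ => (1:ℝ))) : Fin (d+dy) → ℝ) = 1 := by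
      rw [normInf]
      have h4 : ∀ i : Fin (d+dy),
          |(((fun _ => (0:ℝ)) - (fun _ => (1:ℝ))) : Fin (d+dy) → ℝ) i| = 1 := by
        intro i; simp
      rw [show (fun i : Fin (d+dy) =>
          |(((fun _ => (0:ℝ)) - (fun _ => (1:ℝ))) : Fin (d+dy) → ℝ) i|) = fun _ => (1:ℝ)
        from funext h4]
      exact ciSup_const
    rw [h3, Real.one_rpow, mul_one] at h2
    exact le_trans (abs_nonneg _) h2
  have hgq : ∀ z, f z y = q (Fin.append z y) := fun z => hqeq z y hy
  have hgc : Continuous (fun z : Fin d → ℝ => f z y) := by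
    rw [show (fun z : Fin d → ℝ => f z y) = fun z => q (Fin.append z y) from funext hgq]
    exact hqcd.continuous.comp (continuous_append_left y)
  have hgB : ∀ z : Fin d → ℝ, |f z y| ≤ B := by
    intro z
    have h1 := hbd1 (fun _ => 0) (by simp) (Fin.append z y)
    rw [multiDeriv_zero] at h1
    rw [hgq z]
    linarith
  have hCg : ∀ z : Fin d → ℝ, C ≤ f z y := fun z => hA2.lower z y hy
  have hfun_eq : (fun x' : Fin d → ℝ => hFun d dy C₂ f t x' y)
      = fun x' => ∫ z, f z y * Gd d (sigmaHat C₂ t) (z - (alphaHat C₂ t) • x') := by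
    funext x'
    rw [hFun]
    congr 1
    funext z
    rw [mul_assoc, kernel_eq d hs]
    congr 1
  obtain ⟨h1, h2, h3⟩ := core (sigmaHat C₂ t) (alphaHat C₂ t) hs ha
    (fun z => f z y) hgc hgB hCg x
  refine ⟨?_, ?_, ?_⟩
  · rw [show hFun d dy C₂ f t x y = _ from congrFun hfun_eq x]
    exact h1
  · rw [show hFun d dy C₂ f t x y = _ from congrFun hfun_eq x]
    exact h2
  · intro i
    rw [hfun_eq]
    exact h3 i


end CDM
end
end
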